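/- Let q ∈ (0,1), let k ∈ ℕ, let A be a unital C*-algebra, and let a, z ∈ A with a positive (a = a* and the spectrum of a contained in [0,∞)) such that z z* = q^{2k}·1 − a and z* z = q^{2k}·1 − q²·a. Then the spectrum of a is contained in {q^{2m} : m ∈ ℕ, m ≥ k} ∪ {0}. -/

import Mathlib

open scoped Pointwise


/-- Let `q ∈ (0,1)`, `k ∈ ℕ`, and let `a, z` be elements of a unital
C*-algebra with `a` positive (selfadjoint with spectrum in `[0,∞)`) such that
`z z* = q^{2k}·1 − a` and `z* z = q^{2k}·1 − q²·a`. Then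
`Sp(a) ⊆ {q^{2m} : m ∈ ℕ, m ≥ k} ∪ {0}`. -/
theorem spectrum_subset_of_sphere_relations
    {A : Type*} [NormedRing A] [StarRing A] [CStarRing A] [NormedAlgebra ℂ A]
    [CompleteSpace A] [StarModule ℂ A]
    (q : ℝ) (hq : q ∈ Set.Ioo (0 : ℝ) 1) (k : ℕ) (a z : A)
    (ha : IsSelfAdjoint a)
    (haspec : spectrum ℂ a ⊆ {x : ℂ | ∃ r : ℝ, 0 ≤ r ∧ x = (r : ℂ)})
    (h1 : z * star z = ((q : ℂ) ^ (2 * k)) • (1 : A) - a)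
    (h2 : star z * z = ((q : ℂ) ^ (2 * k)) • (1 : A) - ((q : ℂ) ^ 2) • a) :
    spectrum ℂ a ⊆ {x : ℂ | ∃ m : ℕ, k ≤ m ∧ x = (q : ℂ) ^ (2 * m)} ∪ {0} := by
  rcases subsingleton_or_nontrivial A with hA | hA
  · intro x hx
    exact absurd (isUnit_of_subsingleton _) hx
  have hq0 : (0 : ℝ) < q := hq.1
  have hq1 : q < 1 := hq.2
  have hqC : (q : ℂ) ≠ 0 := by exact_mod_cast hq0.ne'
  -- key step: if x ∈ σ(a), x ≠ 0 and x ≠ q^{2k}, then x / q² ∈ σ(a)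
  have key : ∀ x : ℂ, x ∈ spectrum ℂ a → x ≠ (q : ℂ) ^ (2 * k) →
      x / (q : ℂ) ^ 2 ∈ spectrum ℂ a := by
    intro x hx hxk
    have hc : ((q : ℂ) ^ (2 * k)) • (1 : A) = algebraMap ℂ A ((q : ℂ) ^ (2 * k)) :=
      (Algebra.algebraMap_eq_smul_one _).symm
    have h1' : spectrum ℂ (z * star z) = ({(q : ℂ) ^ (2 * k)} : Set ℂ) - spectrum ℂ a := by
      rw [h1, hc]
      exact (spectrum.singleton_sub_eq a _).symm
    have hmem : (q : ℂ) ^ (2 * k) - x ∈ spectrum ℂ (z * star z) := by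
      rw [h1']
      exact Set.sub_mem_sub rfl hx
    have hne : (q : ℂ) ^ (2 * k) - x ≠ 0 := sub_ne_zero.mpr (Ne.symm hxk)
    have hswap := spectrum.nonzero_mul_comm (𝕜 := ℂ) z (star z)
    have hmem2 : (q : ℂ) ^ (2 * k) - x ∈ spectrum ℂ (star z * z) := by
      have h' : (q : ℂ) ^ (2 * k) - x ∈ spectrum ℂ (z * star z) \ {0} := ⟨hmem, hne⟩
      rw [hswap] at h'
      exact h'.1
    rw [h2] at hmem2
    have hq2 : ((q : ℂ) ^ 2) ≠ 0 := pow_ne_zero _ hqC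
    have hsm : spectrum ℂ (((q : ℂ) ^ 2) • a) = ((q : ℂ) ^ 2) • spectrum ℂ a := by
      simpa [Units.smul_def] using
        spectrum.unit_smul_eq_smul (R := ℂ) a (Units.mk0 _ hq2)
    have h2' : spectrum ℂ (((q : ℂ) ^ (2 * k)) • (1 : A) - ((q : ℂ) ^ 2) • a)
        = ({(q : ℂ) ^ (2 * k)} : Set ℂ) - ((q : ℂ) ^ 2) • spectrum ℂ a := by
      rw [hc, ← hsm]
      exact (spectrum.singleton_sub_eq _ _).symm
    rw [h2'] at hmem2
    rcases Set.mem_sub.mp hmem2 with ⟨c, hc', w, hw, hcw⟩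
    rcases hw with ⟨y, hy, rfl⟩
    rcases Set.mem_singleton_iff.mp hc' with rfl
    have hxy : x = (q : ℂ) ^ 2 * y := by
      have hcw' : (q : ℂ) ^ (2 * k) - (q : ℂ) ^ 2 * y = (q : ℂ) ^ (2 * k) - x := by
        simpa [smul_eq_mul] using hcw
      linear_combination hcw'
    have : x / (q : ℂ) ^ 2 = y := by
      rw [hxy, mul_comm, mul_div_assoc, div_self hq2, mul_one]
    rw [this]
    exact hy
  intro x hx
  rcases haspec hx with ⟨r, hr0, rfl⟩
  rcases eq_or_lt_of_le hr0 with hr | hr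
  · right
    simp [← hr]
  · left
    -- r > 0; show r = q^{2m} for some m ≥ k
    by_contra hcon
    simp only [Set.mem_setOf_eq] at hcon
    push_neg at hcon
    -- by induction, r / q^{2n} ∈ σ(a) for all n
    have hiter : ∀ n : ℕ, ((r / q ^ (2 * n) : ℝ) : ℂ) ∈ spectrum ℂ a := by
      intro n
      induction n with
      | zero => simpa using hx
      | succ n ih =>
        have hne : ((r / q ^ (2 * n) : ℝ) : ℂ) ≠ (q : ℂ) ^ (2 * k) := by
          intro h
          have : (r / q ^ (2 * n) : ℝ) = q ^ (2 * k) := by exact_mod_cast h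
          have hr' : r = q ^ (2 * (k + n)) := by
            have h' := (div_eq_iff (show (q:ℝ) ^ (2*n) ≠ 0 by positivity)).mp this
            rw [h']; ring
          exact hcon (k + n) (Nat.le_add_right k n) (by exact_mod_cast hr')
        have := key _ ih hne
        have hre : r / q ^ (2 * n) / q ^ 2 = r / q ^ (2 * (n + 1)) := by
          rw [div_div, ← pow_add]
          ring_nf
        have heq : ((r / q ^ (2 * n) : ℝ) : ℂ) / (q : ℂ) ^ 2
            = ((r / q ^ (2 * (n + 1)) : ℝ) : ℂ) := by
          rw [← hre]; push_cast; ring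
        rwa [heq] at this
    -- but the spectrum is norm-bounded by ‖a‖, contradiction
    have hbound : ∀ n : ℕ, r / q ^ (2 * n) ≤ ‖a‖ := by
      intro n
      have := spectrum.norm_le_norm_of_mem (hiter n)
      rwa [Complex.norm_real, Real.norm_eq_abs,
        abs_of_nonneg (show (0:ℝ) ≤ r / q ^ (2*n) by positivity)] at this
    have hna : 0 < ‖a‖ := lt_of_lt_of_le hr (by simpa using hbound 0)
    obtain ⟨n, hn⟩ := exists_pow_lt_of_lt_one (show (0:ℝ) < r / ‖a‖ by positivity)
      (show q ^ 2 < 1 by nlinarith)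
    have h1n : q ^ (2 * n) < r / ‖a‖ := by
      rw [pow_mul]; exact hn
    have : ‖a‖ < r / q ^ (2 * n) := by
      rw [lt_div_iff₀ (by positivity)]
      calc ‖a‖ * q ^ (2 * n) < ‖a‖ * (r / ‖a‖) := by
            exact mul_lt_mul_of_pos_left h1n hna
        _ = r := by field_simp
    exact absurd (hbound n) (not_le.mpr this)
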